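/- Let E be a finitely generated projective right A⁺-module of the form E = p(A⁺)ⁿ where p ∈ Mₙ(A) for nonunital A, and suppose E is finitely generated over A. Then every element e ∈ E lies in pAⁿ, i.e. E = pAⁿ. -/

import Mathlib

/-- Let `A` be a nonunital ring, an ideal in its unitization
`A⁺ = Unitization ℤ A`, and let `E = p(A⁺)ⁿ` for an idempotent `p ∈ Mₙ(A)`.  If `E` is
finitely generated over `A` (there are `e₁, …, e_M ∈ E` such that every `e ∈ E` is a sum
`∑ eᵢ·aᵢ` with `aᵢ ∈ A`), then every element of `E` lies in `pAⁿ`, i.e. `E = pAⁿ`. -/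
theorem stmt_3 (A : Type*) [NonUnitalRing A] (n : ℕ)
    (p : Matrix (Fin n) (Fin n) (Unitization ℤ A))
    (hpA : ∀ i j, ∃ a : A, p i j = (a : Unitization ℤ A)) (hp : p * p = p)
    (E : Set (Fin n → Unitization ℤ A))
    (hE : E = {w | ∃ v : Fin n → Unitization ℤ A, w = p.mulVec v})
    (hfg : ∃ (M : ℕ) (e : Fin M → (Fin n → Unitization ℤ A)), (∀ k, e k ∈ E) ∧
      ∀ w ∈ E, ∃ a : Fin M → A,
        w = ∑ k, (fun i => e k i * ((a k : Unitization ℤ A)))) :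
    ∀ w ∈ E, ∃ v : Fin n → A, w = p.mulVec (fun j => ((v j : Unitization ℤ A))) := by
  intro w hw
  obtain ⟨M, e, heE, hgen⟩ := hfg
  obtain ⟨a, ha⟩ := hgen w hw
  have hwE : w = p.mulVec w := by
    rw [hE] at hw
    obtain ⟨v, rfl⟩ := hw
    conv_lhs => rw [← hp]
    exact (Matrix.mulVec_mulVec v p p).symm
  have hfst : ∀ i, (w i).fst = 0 := by
    intro i
    have := congrFun ha i
    rw [this]
    rw [Finset.sum_apply]
    exact Finset.sum_induction _ (fun (x : Unitization ℤ A) => x.fst = 0)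
      (fun x y hx hy => by simp [hx, hy]) (by simp)
      (fun k _ => by simp [Unitization.fst_mul])
  refine ⟨fun j => (w j).snd, ?_⟩
  have hw' : (fun j => (((w j).snd : A) : Unitization ℤ A)) = w := by
    funext j
    exact Unitization.ext (by simp [hfst j]) (by simp)
  rw [hw']
  exact hwE
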